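/- arXiv:1711.05324 — 7 statements merged into one kernel-verified Lean document; each statement's English description precedes it below -/
import Mathlib

section
/- Let S ∈ {0,1}^{m×p} and Δ ∈ {0,1}^{p×m} be binary matrices. The subspace Sparse(S) ⊆ ℝ^{m×p} satisfies L·M·L' ∈ Sparse(S) for all L, L' ∈ Sparse(S) and all M ∈ Sparse(Δ), if and only if S·Δ·S ≤ S (Boolean product, entrywise order). -/
open Matrix Pointwise

/-- Boolean matrix product: (X·Z)(i,j) = 1 iff ∃ k, X(i,k)=1 ∧ Z(k,j)=1. -/
def bmul {α β γ : Type} [Fintype β] (X : Matrix α β Bool) (Z : Matrix β γ Bool) :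
    Matrix α γ Bool :=
  fun i j => decide (∃ k, X i k = true ∧ Z k j = true)

/-- Entrywise order on binary matrices. -/
def ble {α β : Type} (X Y : Matrix α β Bool) : Prop :=
  ∀ i j, X i j = true → Y i j = true

/-- Support pattern of a real matrix. -/
noncomputable def struct {α β : Type} (Y : Matrix α β ℝ) : Matrix α β Bool :=
  fun i j => decide (Y i j ≠ 0)

/-- Sparsity subspace of a binary matrix. -/
def sparse {α β : Type} (X : Matrix α β Bool) : Set (Matrix α β ℝ) :=
  {Y | ∀ i j, X i j = false → Y i j = 0}

/-- Boolean matrix power. -/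
def bpow {α : Type} [Fintype α] [DecidableEq α] (Z : Matrix α α Bool) :
    ℕ → Matrix α α Bool
  | 0 => fun i j => decide (i = j)
  | k + 1 => bmul (bpow Z k) Z
theorem stmt3 {m p : ℕ} (S : Matrix (Fin m) (Fin p) Bool) (Δ : Matrix (Fin p) (Fin m) Bool) :
    (∀ L ∈ sparse S, ∀ L' ∈ sparse S, ∀ M ∈ sparse Δ, L * M * L' ∈ sparse S) ↔
      ble (bmul (bmul S Δ) S) S := by
  constructor
  · intro h i j hij
    simp only [bmul, decide_eq_true_eq] at hij
    obtain ⟨l, ⟨k, hSik, hDkl⟩, hSlj⟩ := hij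
    set L : Matrix (Fin m) (Fin p) ℝ := fun a b => if S a b then 1 else 0 with hLdef
    set M : Matrix (Fin p) (Fin m) ℝ := fun a b => if Δ a b then 1 else 0 with hMdef
    have hLs : L ∈ sparse S := by intro a b hab; simp [hLdef, hab]
    have hMs : M ∈ sparse Δ := by intro a b hab; simp [hMdef, hab]
    have hprod := h L hLs L hLs M hMs
    by_contra hS
    have hSf : S i j = false := by simpa using hS
    have hz := hprod i j hSf
    have hLnn : ∀ a b, 0 ≤ L a b := by intro a b; simp only [hLdef]; positivity
    have hMnn : ∀ a b, 0 ≤ M a b := by intro a b; simp only [hMdef]; positivity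
    have hinner : ∀ l', 0 ≤ (L * M) i l' := by
      intro l'
      rw [Matrix.mul_apply]
      exact Finset.sum_nonneg fun k' _ => mul_nonneg (hLnn _ _) (hMnn _ _)
    have hinnerpos : 0 < (L * M) i l := by
      rw [Matrix.mul_apply]
      refine Finset.sum_pos' (fun k' _ => mul_nonneg (hLnn _ _) (hMnn _ _))
        ⟨k, Finset.mem_univ k, ?_⟩
      simp [hLdef, hMdef, hSik, hDkl]
    have hpos : 0 < (L * M * L) i j := by
      rw [Matrix.mul_apply]
      refine Finset.sum_pos' (fun l' _ => mul_nonneg (hinner l') (hLnn _ _))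
        ⟨l, Finset.mem_univ l, ?_⟩
      have : L l j = 1 := by simp [hLdef, hSlj]
      rw [this, mul_one]
      exact hinnerpos
    rw [hz] at hpos
    exact lt_irrefl 0 hpos
  · intro h L hL L' hL' M hM i j hij
    have hb : bmul (bmul S Δ) S i j = false := by
      by_contra hc
      rw [Bool.not_eq_false] at hc
      rw [h i j hc] at hij
      simp at hij
    simp only [bmul, decide_eq_true_eq, decide_eq_false_iff_not, not_exists, not_and] at hb
    show (L * M * L') i j = 0
    rw [Matrix.mul_apply]
    apply Finset.sum_eq_zero
    intro l _
    by_cases hSlj : S l j = true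
    · have hLM : (L * M) i l = 0 := by
        rw [Matrix.mul_apply]
        apply Finset.sum_eq_zero
        intro k _
        by_cases hSik : S i k = true
        · have hDkl : Δ k l = false := by
            have := hb l
            by_contra hD
            rw [Bool.not_eq_false] at hD
            exact absurd hSlj (this ⟨k, hSik, hD⟩)
          rw [hM k l hDkl, mul_zero]
        · rw [hL i k (Bool.not_eq_true _ |>.mp hSik), zero_mul]
      rw [hLM, zero_mul]
    · rw [hL' l j (Bool.not_eq_true _ |>.mp hSlj), mul_zero]
end

section
/- Let 𝒮 ⊆ ℝ^{m×p} be a sparsity subspace (𝒮 = Sparse(S) for some binary matrix S, restricted to block lower triangular matrices) and let Y ∈ ℝ^{p×m} be such that YX is nilpotent for every X ∈ 𝒮. If 𝒮 is quadratically invariant with respect to Y, i.e., L·Y·L' ∈ 𝒮 for all L, L' ∈ 𝒮, then for every L ∈ 𝒮, h(L, Y) = -L(I - YL)^{-1} ∈ -𝒮; in particular h(𝒮, Y) ⊆ -𝒮. -/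
open Matrix Pointwise

lemma sparse_sum {α β γ : Type} (X : Matrix α β Bool) (s : Finset γ)
    (f : γ → Matrix α β ℝ) (h : ∀ c ∈ s, f c ∈ sparse X) :
    (∑ c ∈ s, f c) ∈ sparse X := by
  intro i j hij
  rw [Matrix.sum_apply]
  exact Finset.sum_eq_zero fun c hc => h c hc i j hij

theorem stmt6 {m p : ℕ} (Sb : Matrix (Fin m) (Fin p) Bool) (Y : Matrix (Fin p) (Fin m) ℝ)
    (hnil : ∀ X ∈ sparse Sb, IsNilpotent (Y * X))
    (hQI : ∀ L ∈ sparse Sb, ∀ L' ∈ sparse Sb, L * Y * L' ∈ sparse Sb) :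
    ∀ L ∈ sparse Sb, -(L * (1 - Y * L)⁻¹) ∈ -(sparse Sb) := by
  intro L hL
  rw [Set.neg_mem_neg]
  obtain ⟨n, hn⟩ := hnil L hL
  have hinv : (1 - Y * L) * (∑ k ∈ Finset.range n, (Y * L) ^ k) = 1 := by
    rw [Matrix.sub_mul, Matrix.one_mul, Finset.mul_sum]
    have h1 : ∀ k, (Y * L) * (Y * L) ^ k = (Y * L) ^ (k + 1) := fun k => (pow_succ' _ _).symm
    simp_rw [h1]
    have h2 : ∑ k ∈ Finset.range n, ((Y * L) ^ (k + 1) - (Y * L) ^ k)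
        = (Y * L) ^ n - (Y * L) ^ 0 := Finset.sum_range_sub (fun k => (Y * L) ^ k) n
    rw [Finset.sum_sub_distrib] at h2
    have : ∑ k ∈ Finset.range n, (Y * L) ^ k - ∑ k ∈ Finset.range n, (Y * L) ^ (k + 1)
        = -((Y * L) ^ n - (Y * L) ^ 0) := by rw [← h2]; abel
    rw [this, hn, pow_zero]
    simp
  have hinv' : (1 - Y * L)⁻¹ = ∑ k ∈ Finset.range n, (Y * L) ^ k :=
    Matrix.inv_eq_right_inv hinv
  rw [hinv', Matrix.mul_sum]
  apply sparse_sum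
  have key : ∀ k, L * (Y * L) ^ k ∈ sparse Sb := by
    intro k
    induction k with
    | zero => simpa using hL
    | succ k ih =>
      have : L * (Y * L) ^ (k + 1) = (L * (Y * L) ^ k) * Y * L := by
        rw [pow_succ, ← Matrix.mul_assoc, ← Matrix.mul_assoc, Matrix.mul_assoc]
      rw [this]
      exact hQI _ ih _ hL
  exact fun k _ => key k
end

section
/- Let S ∈ {0,1}^{m×p} and Δ_g = Struct(C·A^g·B) for a system (A,B,C) with A ∈ ℝ^{n×n}. If S·Δ_g·S ≤ S for all g ∈ [0, n-1], then S·Δ_v·S ≤ S for all natural numbers v. -/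
open Matrix Pointwise

open Polynomial in

lemma stmt11_pow_mem_span {n : ℕ} (A : Matrix (Fin n) (Fin n) ℝ) (v : ℕ) :
    A ^ v ∈ Submodule.span ℝ (Set.range fun i : Fin n => A ^ (i : ℕ)) := by
  set sp := Submodule.span ℝ (Set.range fun i : Fin n => A ^ (i : ℕ)) with hsp
  rcases Nat.eq_zero_or_pos n with hn | hn
  · subst hn
    have : A ^ v = 0 := Subsingleton.elim _ _
    rw [this]; exact Submodule.zero_mem _
  have hgen : ∀ i, i < n → A ^ i ∈ sp := fun i hi =>
    Submodule.subset_span ⟨⟨i, hi⟩, rfl⟩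
  have hAn : A ^ n ∈ sp := by
    have h0 : aeval A A.charpoly = 0 := A.aeval_self_charpoly
    rw [aeval_eq_sum_range' (by simp [A.charpoly_natDegree_eq_dim] : A.charpoly.natDegree < n + 1)] at h0
    rw [Finset.sum_range_succ] at h0
    have hc : A.charpoly.coeff n = 1 := by
      have := A.charpoly_monic
      rw [Monic, leadingCoeff, A.charpoly_natDegree_eq_dim] at this; simpa using this
    rw [hc, one_smul] at h0
    have : A ^ n = -∑ i ∈ Finset.range n, A.charpoly.coeff i • A ^ i := by
      linear_combination (norm := module) h0
    rw [this]
    exact Submodule.neg_mem _ (Submodule.sum_mem _ fun i hi =>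
      Submodule.smul_mem _ _ (hgen i (Finset.mem_range.mp hi)))
  have hmul : ∀ X ∈ sp, X * A ∈ sp := by
    intro X hX
    induction hX using Submodule.span_induction with
    | mem x hx =>
      obtain ⟨i, rfl⟩ := hx
      rw [← pow_succ]
      rcases Nat.lt_or_ge ((i : ℕ) + 1) n with hlt | hge
      · exact hgen _ hlt
      · have : (i : ℕ) + 1 = n := le_antisymm (i.2) hge
        rw [this]; exact hAn
    | zero => simpa using Submodule.zero_mem sp
    | add x y _ _ hx hy => simpa [add_mul] using Submodule.add_mem sp hx hy
    | smul c x _ hx => simpa [smul_mul_assoc] using Submodule.smul_mem sp c hx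
  induction v with
  | zero => simpa using hgen 0 hn
  | succ k ih => rw [pow_succ]; exact hmul _ ih

theorem stmt11 {n m p : ℕ} (A : Matrix (Fin n) (Fin n) ℝ) (B : Matrix (Fin n) (Fin m) ℝ)
    (C : Matrix (Fin p) (Fin n) ℝ) (S : Matrix (Fin m) (Fin p) Bool)
    (h : ∀ g, g < n → ble (bmul (bmul S (struct (C * A ^ g * B))) S) S) :
    ∀ v : ℕ, ble (bmul (bmul S (struct (C * A ^ v * B))) S) S := by
  intro v i j hij
  obtain ⟨c, hc⟩ := (Submodule.mem_span_range_iff_exists_fun (R := ℝ)).mp (stmt11_pow_mem_span A v)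
  have hdecomp : C * A ^ v * B = ∑ g : Fin n, c g • (C * A ^ (g : ℕ) * B) := by
    rw [← hc]
    simp [Matrix.mul_sum, Matrix.sum_mul, Matrix.mul_smul, Matrix.smul_mul]
  simp only [bmul, decide_eq_true_eq] at hij
  obtain ⟨k, ⟨l, hSl, hstruct⟩, hSk⟩ := hij
  simp only [struct, decide_eq_true_eq] at hstruct
  have : ∃ g : Fin n, (C * A ^ (g : ℕ) * B) l k ≠ 0 := by
    by_contra hall
    push_neg at hall
    apply hstruct
    rw [hdecomp]
    simp only [Matrix.sum_apply, Matrix.smul_apply, smul_eq_mul]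
    exact Finset.sum_eq_zero fun g _ => by rw [hall g, mul_zero]
  obtain ⟨g, hg⟩ := this
  apply h g g.2 i j
  simp only [bmul, decide_eq_true_eq]
  exact ⟨k, ⟨l, hSl, by simp [struct, hg]⟩, hSk⟩
end

section
/- Let S ∈ {0,1}^{m×p}, Z ∈ {0,1}^{m×m} with Z ≥ I_m, and binary matrices Δ_g for g ≥ 0. Suppose S·Δ_g·Z^r·S ≤ Z^{g+r+1}·S for all g, r ≥ 0 (Boolean products, entrywise order). Then for all k ∈ [1, N-1], j ∈ [0, k-1], h ∈ [j+1, k], g ∈ [0, h-j-1], setting S_{a,b} = Z^{a-b}·S, the inequality S_{k,h}·Δ_g·S_{h-g-1,j} ≤ S_{k,j} holds. -/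
open Matrix Pointwise

lemma bmul_assoc {α β γ δ : Type} [Fintype β] [Fintype γ]
    (X : Matrix α β Bool) (Y : Matrix β γ Bool) (W : Matrix γ δ Bool) :
    bmul (bmul X Y) W = bmul X (bmul Y W) := by
  funext i j
  simp only [bmul]
  refine decide_eq_decide.mpr ⟨?_, ?_⟩
  · rintro ⟨c, hc, hw⟩
    rw [decide_eq_true_iff] at hc
    obtain ⟨b, hb, hy⟩ := hc
    exact ⟨b, hb, decide_eq_true ⟨c, hy, hw⟩⟩
  · rintro ⟨b, hb, hc⟩
    rw [decide_eq_true_iff] at hc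
    obtain ⟨c, hy, hw⟩ := hc
    exact ⟨c, decide_eq_true ⟨b, hb, hy⟩, hw⟩

lemma ble_bmul_left {α β γ : Type} [Fintype β] (W : Matrix α β Bool)
    {X Y : Matrix β γ Bool} (hxy : ble X Y) : ble (bmul W X) (bmul W Y) := by
  intro i j hij
  rw [bmul, decide_eq_true_iff] at hij ⊢
  obtain ⟨b, hw, hx⟩ := hij
  exact ⟨b, hw, hxy _ _ hx⟩

lemma bpow_add {α : Type} [Fintype α] [DecidableEq α] (Z : Matrix α α Bool) (a b : ℕ) :
    bpow Z (a + b) = bmul (bpow Z a) (bpow Z b) := by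
  induction b with
  | zero =>
    funext i j
    simp only [Nat.add_zero, bpow, bmul]
    cases hb : bpow Z a i j with
    | true => exact (decide_eq_true ⟨j, hb, decide_eq_true rfl⟩).symm
    | false =>
      symm
      refine decide_eq_false ?_
      rintro ⟨c, hc, hd⟩
      rw [decide_eq_true_iff] at hd
      subst hd
      rw [hb] at hc
      exact Bool.false_ne_true hc
  | succ b ih =>
    show bpow Z (a + b + 1) = bmul (bpow Z a) (bmul (bpow Z b) Z)
    rw [← bmul_assoc, ← ih]
    rfl

theorem stmt14 {m p : ℕ} (N : ℕ) (S : Matrix (Fin m) (Fin p) Bool)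
    (Z : Matrix (Fin m) (Fin m) Bool) (hdiag : ∀ i, Z i i = true)
    (Δ : ℕ → Matrix (Fin p) (Fin m) Bool)
    (h : ∀ g r : ℕ, ble (bmul (bmul (bmul S (Δ g)) (bpow Z r)) S) (bmul (bpow Z (g + r + 1)) S)) :
    ∀ k j h' g : ℕ, 1 ≤ k → k < N → j < k → j + 1 ≤ h' → h' ≤ k → g + j + 1 ≤ h' →
      ble (bmul (bmul (bmul (bpow Z (k - h')) S) (Δ g)) (bmul (bpow Z (h' - g - 1 - j)) S))
        (bmul (bpow Z (k - j)) S) := by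
  intro k j h' g hk1 hkN hjk hjh hk hg
  set r := h' - g - 1 - j with hr
  have key : ble (bmul (bpow Z (k - h')) (bmul (bmul (bmul S (Δ g)) (bpow Z r)) S))
      (bmul (bpow Z (k - h')) (bmul (bpow Z (g + r + 1)) S)) :=
    ble_bmul_left _ (h g r)
  have e1 : bmul (bmul (bmul (bpow Z (k - h')) S) (Δ g)) (bmul (bpow Z r) S)
      = bmul (bpow Z (k - h')) (bmul (bmul (bmul S (Δ g)) (bpow Z r)) S) := by
    simp only [bmul_assoc]
  have e2 : bmul (bpow Z (k - h')) (bmul (bpow Z (g + r + 1)) S)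
      = bmul (bpow Z (k - j)) S := by
    rw [← bmul_assoc, ← bpow_add]
    have : k - h' + (g + r + 1) = k - j := by omega
    rw [this]
  rw [e1, ← e2]
  exact key
end

section
/- Suppose the binary matrices Δ_g = Struct(C·A^g·B) (A ∈ ℝ^{n×n}) and Z ∈ {0,1}^{m×m} with Z ≥ I_m satisfy S·Δ_g·Z^r·S ≤ Z^{g+r+1}·S for all g ∈ [0, n-1] and all r ∈ [0, D], where D is the diameter of Z (least D with Z^{D+k} = Z^D for all k ≥ 0). Then S·Δ_v·Z^r·S ≤ Z^{v+r+1}·S for all natural numbers v and r. -/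
open Matrix Pointwise

lemma keyCH {n p m : ℕ} (A : Matrix (Fin n) (Fin n) ℝ) (B : Matrix (Fin n) (Fin m) ℝ)
    (C : Matrix (Fin p) (Fin n) ℝ) (v : ℕ) (a : Fin p) (b : Fin m)
    (h : struct (C * A ^ v * B) a b = true) :
    ∃ g, g < n ∧ g ≤ v ∧ struct (C * A ^ g * B) a b = true := by
  rcases lt_or_ge v n with hv | hv
  · exact ⟨v, hv, le_refl v, h⟩
  rcases Nat.eq_zero_or_pos n with rfl | hn
  · exfalso
    have hz : (C * A ^ v * B) a b = 0 := by
      simp [Matrix.mul_apply]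
    simp [struct, hz] at h
  set q := (Polynomial.X : Polynomial ℝ) ^ v %ₘ (Matrix.charpoly A) with hq
  have hmonic : (Matrix.charpoly A).Monic := Matrix.charpoly_monic A
  have hdeg : q.degree < (n : ℕ) := by
    have h1 := Polynomial.degree_modByMonic_lt ((Polynomial.X : Polynomial ℝ) ^ v) hmonic
    have h2 : (Matrix.charpoly A).degree = (n : ℕ) := by
      simpa using Matrix.charpoly_degree_eq_dim A
    rw [h2] at h1
    exact h1
  have hAv : A ^ v = Polynomial.aeval A q := by
    have h1 : q + Matrix.charpoly A * ((Polynomial.X : Polynomial ℝ) ^ v /ₘ Matrix.charpoly A)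
        = (Polynomial.X : Polynomial ℝ) ^ v := Polynomial.modByMonic_add_div _ _
    have h2 := congrArg (Polynomial.aeval A) h1
    simp only [map_add, _root_.map_mul, map_pow, Polynomial.aeval_X,
      Matrix.aeval_self_charpoly, zero_mul, add_zero] at h2
    exact h2.symm
  have hnat : q.natDegree < n := by
    rcases eq_or_ne q 0 with h0 | h0
    · simpa [h0] using hn
    · exact (Polynomial.natDegree_lt_iff_degree_lt h0).mpr hdeg
  have hsum : A ^ v = ∑ i ∈ Finset.range n, q.coeff i • A ^ i := by
    rw [hAv, Polynomial.aeval_eq_sum_range' hnat]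
  by_contra hcon
  push_neg at hcon
  have hz : ∀ g < n, (C * A ^ g * B) a b = 0 := by
    intro g hg
    have h3 := hcon g hg (hg.le.trans hv)
    simpa [struct] using h3
  have hzero : (C * A ^ v * B) a b = 0 := by
    have he : C * A ^ v * B = ∑ i ∈ Finset.range n, q.coeff i • (C * A ^ i * B) := by
      rw [hsum, Matrix.mul_sum, Matrix.sum_mul]
      refine Finset.sum_congr rfl fun i _ => ?_
      rw [Matrix.mul_smul, Matrix.smul_mul]
    rw [he, Matrix.sum_apply]
    refine Finset.sum_eq_zero fun i hi => ?_
    rw [Matrix.smul_apply, hz i (Finset.mem_range.mp hi), smul_zero]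
  simp [struct, hzero] at h

lemma bpow_mono {m : ℕ} {Z : Matrix (Fin m) (Fin m) Bool} (hdiag : ∀ i, Z i i = true)
    {a b : ℕ} (hab : a ≤ b) : ble (bpow Z a) (bpow Z b) := by
  induction b with
  | zero => obtain rfl := Nat.le_zero.mp hab; exact fun i j hh => hh
  | succ b ih =>
    rcases Nat.lt_or_ge a (b + 1) with h1 | h1
    · intro i j hh
      have h2 := ih (Nat.lt_succ_iff.mp h1) i j hh
      simp only [bpow, bmul, decide_eq_true_eq]
      exact ⟨j, h2, hdiag j⟩
    · obtain rfl : a = b + 1 := le_antisymm hab h1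
      exact fun i j hh => hh

theorem stmt15 {n m p : ℕ} (A : Matrix (Fin n) (Fin n) ℝ) (B : Matrix (Fin n) (Fin m) ℝ)
    (C : Matrix (Fin p) (Fin n) ℝ) (S : Matrix (Fin m) (Fin p) Bool)
    (Z : Matrix (Fin m) (Fin m) Bool) (hdiag : ∀ i, Z i i = true)
    (D : ℕ) (hD : ∀ k : ℕ, bpow Z (D + k) = bpow Z D)
    (hDmin : ∀ D' < D, ¬ ∀ k : ℕ, bpow Z (D' + k) = bpow Z D')
    (h : ∀ g r : ℕ, g < n → r ≤ D →
      ble (bmul (bmul (bmul S (struct (C * A ^ g * B))) (bpow Z r)) S)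
        (bmul (bpow Z (g + r + 1)) S)) :
    ∀ v r : ℕ,
      ble (bmul (bmul (bmul S (struct (C * A ^ v * B))) (bpow Z r)) S)
        (bmul (bpow Z (v + r + 1)) S) := by
  intro v r i j hij
  simp only [bmul, decide_eq_true_eq] at hij
  obtain ⟨k3, ⟨k2, ⟨k1, hS1, hΔ⟩, hZ⟩, hS3⟩ := hij
  obtain ⟨g, hg, hgv, hΔg⟩ := keyCH A B C v k1 k2 hΔ
  have hpow : bpow Z r = bpow Z (min r D) := by
    rcases le_or_gt r D with hr | hr
    · rw [min_eq_left hr]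
    · rw [min_eq_right hr.le]
      have h1 := hD (r - D)
      rwa [Nat.add_sub_cancel' hr.le] at h1
  have happ := h g (min r D) hg (min_le_right r D) i j (by
    simp only [bmul, decide_eq_true_eq]
    exact ⟨k3, ⟨k2, ⟨k1, hS1, hΔg⟩, by rw [← hpow]; exact hZ⟩, hS3⟩)
  simp only [bmul, decide_eq_true_eq] at happ ⊢
  obtain ⟨t, hpt, hts⟩ := happ
  exact ⟨t, bpow_mono hdiag (by omega) i t hpt, hts⟩
end

section
/- Let S ∈ {0,1}^{m×p}, M ∈ ℝ^{p×m}, and suppose S·Struct(M)·S ≰ S, i.e., there exist indices a, b with (S·Struct(M)·S)(a,b) = 1 but S(a,b) = 0. Then there exist real matrices L, L' ∈ Sparse(S) such that L·M·L' ∉ Sparse(S). -/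
open Matrix Pointwise

theorem stmt16 {m p : ℕ} (S : Matrix (Fin m) (Fin p) Bool) (M : Matrix (Fin p) (Fin m) ℝ)
    (a : Fin m) (b : Fin p)
    (h1 : bmul (bmul S (struct M)) S a b = true) (h2 : S a b = false) :
    ∃ L L' : Matrix (Fin m) (Fin p) ℝ,
      L ∈ sparse S ∧ L' ∈ sparse S ∧ L * M * L' ∉ sparse S := by
  simp only [bmul, decide_eq_true_eq] at h1
  obtain ⟨k, ⟨c, hac, hck⟩, hkb⟩ := h1
  simp only [struct, decide_eq_true_eq] at hck
  refine ⟨Matrix.single a c (1:ℝ), Matrix.single k b (1:ℝ), ?_, ?_, ?_⟩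
  · intro i j hij
    simp only [Matrix.single, of_apply, ite_eq_right_iff, one_ne_zero, imp_false, not_and]
    intro h1 h2; rw [← h1, ← h2] at hij; rw [hij] at hac; exact Bool.false_ne_true hac
  · intro i j hij
    simp only [Matrix.single, of_apply, ite_eq_right_iff, one_ne_zero, imp_false, not_and]
    intro h1 h2; rw [← h1, ← h2] at hij; rw [hij] at hkb; exact Bool.false_ne_true hkb
  · intro hmem
    have := hmem a b h2
    have hval : (Matrix.single a c (1:ℝ) * M * Matrix.single k b (1:ℝ)) a b = M c k := by
      simp [Matrix.mul_apply, Matrix.single, Finset.sum_ite_eq, Finset.sum_ite_eq']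
    rw [hval] at this
    exact hck this
end

section
/- Let 𝒮 be a subspace of ℝ^{m×p} and Y ∈ ℝ^{p×m} such that Y·X is nilpotent for every X ∈ 𝒮, and let h(X,Y) = -X(I - YX)^{-1}. If h(𝒮, Y) := {h(X,Y) : X ∈ 𝒮} is a convex set, then h(𝒮, Y) = -𝒮. -/
open Matrix Pointwise

open Matrix

section Aux

variable {n : ℕ}

lemma nilDet {N : Matrix (Fin n) (Fin n) ℝ} (h : IsNilpotent N) :
    IsUnit (1 - N).det :=
  (Matrix.isUnit_iff_isUnit_det _).mp h.isUnit_one_sub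

lemma nilInvMul {N : Matrix (Fin n) (Fin n) ℝ} (h : IsNilpotent N) :
    (1 - N)⁻¹ * (1 - N) = 1 :=
  Matrix.nonsing_inv_mul _ (nilDet h)

lemma nilMulInv {N : Matrix (Fin n) (Fin n) ℝ} (h : IsNilpotent N) :
    (1 - N) * (1 - N)⁻¹ = 1 :=
  Matrix.mul_nonsing_inv _ (nilDet h)

lemma nilSmul {N : Matrix (Fin n) (Fin n) ℝ} (h : IsNilpotent N) (c : ℝ) :
    IsNilpotent (c • N) := by
  obtain ⟨k, hk⟩ := h
  exact ⟨k, by rw [smul_pow, hk, smul_zero]⟩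

end Aux

section Invol

variable {m p : ℕ} (Y : Matrix (Fin p) (Fin m) ℝ)

/-- The involution property: h(h(W)) = W whenever Y*W is nilpotent. -/
lemma invol (W : Matrix (Fin m) (Fin p) ℝ) (hW : IsNilpotent (Y * W)) :
    -((-(W * (1 - Y * W)⁻¹)) * (1 - Y * (-(W * (1 - Y * W)⁻¹)))⁻¹) = W := by
  set N := Y * W with hN
  set D := (1 - N)⁻¹ with hD
  have hYK : Y * (-(W * D)) = -(N * D) := by
    rw [Matrix.mul_neg, ← Matrix.mul_assoc, hN]
  have h1 : 1 - Y * (-(W * D)) = 1 + N * D := by rw [hYK, sub_neg_eq_add]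
  have h : D * (1 - N) = 1 := nilInvMul hW
  have h2 : (1 + N * D) * (1 - N) = 1 := by
    rw [add_mul, one_mul, Matrix.mul_assoc, h, mul_one]
    abel
  have h3 : (1 - Y * (-(W * D)))⁻¹ = 1 - N := by
    rw [h1]; exact Matrix.inv_eq_right_inv h2
  rw [h3, Matrix.neg_mul, neg_neg, Matrix.mul_assoc, h, Matrix.mul_one]

/-- Computation: h(α • h(X)) = α • (X * (1 - (1-α) • (Y*X))⁻¹). -/
lemma comp (X : Matrix (Fin m) (Fin p) ℝ) (hX : IsNilpotent (Y * X)) (α : ℝ) :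
    -((α • (-(X * (1 - Y * X)⁻¹))) * (1 - Y * (α • (-(X * (1 - Y * X)⁻¹))))⁻¹)
      = α • (X * (1 - (1 - α) • (Y * X))⁻¹) := by
  set A := Y * X with hA
  set D := (1 - A)⁻¹ with hD
  set E := (1 - (1 - α) • A)⁻¹ with hE
  have hYK : Y * (α • (-(X * D))) = -(α • (A * D)) := by
    rw [Matrix.mul_smul, Matrix.mul_neg, ← Matrix.mul_assoc, ← hA, smul_neg]
  have h1 : 1 - Y * (α • (-(X * D))) = 1 + α • (A * D) := by
    rw [hYK, sub_neg_eq_add]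
  have hDA : D * (1 - A) = 1 := nilInvMul hX
  have hBE : (1 - (1 - α) • A) * E = 1 := nilMulInv (nilSmul hX (1 - α))
  have h2 : (1 + α • (A * D)) * ((1 - A) * E) = 1 := by
    have expand : (1 + α • (A * D)) * ((1 - A) * E)
        = (1 - A) * E + α • (A * (D * (1 - A)) * E) := by
      simp only [add_mul, one_mul, Matrix.smul_mul, Matrix.mul_assoc]
    rw [expand, hDA, mul_one, ← Matrix.smul_mul, ← add_mul]
    have : (1 - A) + α • A = 1 - (1 - α) • A := by
      rw [sub_smul, one_smul]; abel
    rw [this, hBE]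
  have h3 : (1 - Y * (α • (-(X * D))))⁻¹ = (1 - A) * E := by
    rw [h1]; exact Matrix.inv_eq_right_inv h2
  rw [h3, smul_neg, Matrix.neg_mul, neg_neg, Matrix.smul_mul, Matrix.mul_assoc,
    ← Matrix.mul_assoc D, hDA, one_mul]

end Invol

section Main

variable {m p : ℕ} (𝒮 : Submodule ℝ (Matrix (Fin m) (Fin p) ℝ))
    (Y : Matrix (Fin p) (Fin m) ℝ)

lemma star_mem (hnil : ∀ X ∈ 𝒮, IsNilpotent (Y * X))
    (hconv : Convex ℝ ((fun X : Matrix (Fin m) (Fin p) ℝ => -(X * (1 - Y * X)⁻¹)) ''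
      (𝒮 : Set (Matrix (Fin m) (Fin p) ℝ)))) :
    ∀ X ∈ 𝒮, ∀ α : ℝ, 0 ≤ α → α ≤ 1 →
      α • (X * (1 - (1 - α) • (Y * X))⁻¹) ∈ 𝒮 := by
  intro X hX α hα0 hα1
  have memX : -(X * (1 - Y * X)⁻¹) ∈
      ((fun X : Matrix (Fin m) (Fin p) ℝ => -(X * (1 - Y * X)⁻¹)) ''
        (𝒮 : Set (Matrix (Fin m) (Fin p) ℝ))) := ⟨X, hX, rfl⟩
  have mem0 : (0 : Matrix (Fin m) (Fin p) ℝ) ∈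
      ((fun X : Matrix (Fin m) (Fin p) ℝ => -(X * (1 - Y * X)⁻¹)) ''
        (𝒮 : Set (Matrix (Fin m) (Fin p) ℝ))) :=
    ⟨0, 𝒮.zero_mem, by simp [Matrix.zero_mul]⟩
  have hc := hconv memX mem0 hα0 (sub_nonneg.mpr hα1) (by ring)
  rw [smul_zero, add_zero] at hc
  obtain ⟨W, hW, hWeq⟩ := hc
  have e1 : -((α • (-(X * (1 - Y * X)⁻¹))) *
      (1 - Y * (α • (-(X * (1 - Y * X)⁻¹))))⁻¹) = W := by
    rw [← hWeq]; exact invol Y W (hnil W hW)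
  rw [comp Y X (hnil X hX) α] at e1
  exact e1 ▸ hW

lemma key2 (hnil : ∀ X ∈ 𝒮, IsNilpotent (Y * X))
    (hconv : Convex ℝ ((fun X : Matrix (Fin m) (Fin p) ℝ => -(X * (1 - Y * X)⁻¹)) ''
      (𝒮 : Set (Matrix (Fin m) (Fin p) ℝ)))) :
    ∀ X ∈ 𝒮, ∀ s : ℝ, X * (1 - s • (Y * X))⁻¹ ∈ 𝒮 := by
  intro X hX s
  rcases eq_or_ne s 0 with hs | hs
  · simpa [hs, Matrix.mul_one] using hX
  · have h1 := star_mem 𝒮 Y hnil hconv ((2 * s) • X) (𝒮.smul_mem _ hX) (1/2)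
      (by norm_num) (by norm_num)
    have ha : ((1:ℝ) - 1/2) * (2 * s) = s := by ring
    have hb : ((1:ℝ)/2) * (2 * s) = s := by ring
    rw [Matrix.mul_smul, smul_smul, ha, Matrix.smul_mul, smul_smul, hb] at h1
    have h2 := 𝒮.smul_mem s⁻¹ h1
    rwa [smul_smul, inv_mul_cancel₀ hs, one_smul] at h2

end Main


theorem stmt18 {m p : ℕ} (𝒮 : Submodule ℝ (Matrix (Fin m) (Fin p) ℝ))
    (Y : Matrix (Fin p) (Fin m) ℝ)
    (hnil : ∀ X ∈ 𝒮, IsNilpotent (Y * X))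
    (hconv : Convex ℝ ((fun X : Matrix (Fin m) (Fin p) ℝ => -(X * (1 - Y * X)⁻¹)) ''
      (𝒮 : Set (Matrix (Fin m) (Fin p) ℝ)))) :
    (fun X : Matrix (Fin m) (Fin p) ℝ => -(X * (1 - Y * X)⁻¹)) ''
      (𝒮 : Set (Matrix (Fin m) (Fin p) ℝ)) = -(𝒮 : Set (Matrix (Fin m) (Fin p) ℝ)) := by
  ext Z
  simp only [Set.mem_image, SetLike.mem_coe, Set.mem_neg]
  constructor
  · rintro ⟨X, hX, rfl⟩
    rw [neg_neg]
    have := key2 𝒮 Y hnil hconv X hX 1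
    rwa [one_smul] at this
  · intro hZ
    have hnilZ : IsNilpotent (Y * Z) := by
      have := (hnil (-Z) hZ).neg
      rwa [Matrix.mul_neg, neg_neg] at this
    have k := key2 𝒮 Y hnil hconv (-Z) hZ (-1)
    have e : (-Z) * (1 - (-1 : ℝ) • (Y * (-Z)))⁻¹ = -(Z * (1 - Y * Z)⁻¹) := by
      rw [Matrix.mul_neg, smul_neg, neg_one_smul, neg_neg, Matrix.neg_mul]
    rw [e] at k
    exact ⟨_, k, invol Y Z hnilZ⟩
end
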